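/- An infinite word s over a finite alphabet A is a standard Arnoux-Rauzy sequence (A-strict standard episturmian word) if and only if for every letter a ∈ A and every total order on A in which a is the minimal letter, a·s = min(s). -/

import Mathlib

/-- The prefix of length `k` of an infinite word `w : ℕ → A`. -/
def pref {A : Type*} (w : ℕ → A) (k : ℕ) : List A := (List.range k).map w

/-- `u` is a (finite) factor of the infinite word `w`. -/
def IsFactor {A : Type*} (w : ℕ → A) (u : List A) : Prop :=
  ∃ i : ℕ, u = (List.range u.length).map (fun j => w (i + j))

/-- Prepend a letter to an infinite word. -/
def consW {A : Type*} (a : A) (s : ℕ → A) : ℕ → A := fun n => match n with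
  | 0 => a
  | n + 1 => s n

/-- Concatenation of a finite word with an infinite word. -/
def catW {A : Type*} (u : List A) (w : ℕ → A) : ℕ → A := fun n =>
  if h : n < u.length then u.get ⟨n, h⟩ else w (n - u.length)

/-- `u` is the lexicographically smallest factor of `w` of length `k`,
w.r.t. the strict order `lt` on letters. -/
def IsMinFactor {A : Type*} (lt : A → A → Prop) (w : ℕ → A) (k : ℕ) (u : List A) : Prop :=
  IsFactor w u ∧ u.length = k ∧
    ∀ v, IsFactor w v → v.length = k → u = v ∨ List.Lex lt u v

/-- `u` is the lexicographically greatest factor of `w` of length `k`. -/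
def IsMaxFactor {A : Type*} (lt : A → A → Prop) (w : ℕ → A) (k : ℕ) (u : List A) : Prop :=
  IsFactor w u ∧ u.length = k ∧
    ∀ v, IsFactor w v → v.length = k → u = v ∨ List.Lex lt v u

/-- `m = min(w)`: every length-`k` prefix of `m` is the lexicographically
smallest factor of `w` of length `k`. -/
def IsMinWord {A : Type*} (lt : A → A → Prop) (w m : ℕ → A) : Prop :=
  ∀ k : ℕ, IsMinFactor lt w k (pref m k)

/-- `m = max(w)`. -/
def IsMaxWord {A : Type*} (lt : A → A → Prop) (w m : ℕ → A) : Prop :=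
  ∀ k : ℕ, IsMaxFactor lt w k (pref m k)

/-- The letter `z` is separating for `t`: every length-2 factor of `t` contains `z`. -/
def Separating {A : Type*} (z : A) (t : ℕ → A) : Prop :=
  ∀ u, IsFactor t u → u.length = 2 → z ∈ u

/-- The episturmian morphism `Ψ_z` on finite words: `z ↦ z`, `x ↦ zx` for `x ≠ z`. -/
def psiL {A : Type*} [DecidableEq A] (z : A) (u : List A) : List A :=
  u.flatMap (fun x => if x = z then [z] else [z, x])

/-- `t = Ψ_z(y)` for infinite words: the `Ψ_z`-image of every prefix of `y`
is a prefix of `t`. -/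
def PsiImage {A : Type*} [DecidableEq A] (z : A) (y t : ℕ → A) : Prop :=
  ∀ n : ℕ, psiL z (pref y n) = pref t (psiL z (pref y n)).length

/-- `u` is a left special factor of `w`. -/
def LeftSpecial {A : Type*} (w : ℕ → A) (u : List A) : Prop :=
  ∃ a b : A, a ≠ b ∧ IsFactor w (a :: u) ∧ IsFactor w (b :: u)

/-- `u` is a right special factor of `w`. -/
def RightSpecial {A : Type*} (w : ℕ → A) (u : List A) : Prop :=
  ∃ a b : A, a ≠ b ∧ IsFactor w (u ++ [a]) ∧ IsFactor w (u ++ [b])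

/-- `w` is a standard episturmian word: factors closed under reversal and
every left special factor is a prefix. -/
def StdEpisturmian {A : Type*} (w : ℕ → A) : Prop :=
  (∀ u, IsFactor w u → IsFactor w u.reverse) ∧
  (∀ u, LeftSpecial w u → u = pref w u.length)

/-- `w` is an `A`-strict standard episturmian word (standard Arnoux-Rauzy sequence):
standard episturmian and every prefix has every letter as a left extension. -/
def StrictStdEpisturmian {A : Type*} (w : ℕ → A) : Prop :=
  StdEpisturmian w ∧ ∀ (n : ℕ) (a : A), IsFactor w (a :: pref w n)

/-- `w` is episturmian: factors closed under reversal and at most one right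
special factor of each length. -/
def Episturmian {A : Type*} (w : ℕ → A) : Prop :=
  (∀ u, IsFactor w u → IsFactor w u.reverse) ∧
  (∀ u v, RightSpecial w u → RightSpecial w v → u.length = v.length → u = v)

/-- `w` is an `A`-strict episturmian word: it has the same set of factors as some
`A`-strict standard episturmian word. -/
def StrictEpisturmian {A : Type*} (w : ℕ → A) : Prop :=
  ∃ s : ℕ → A, StrictStdEpisturmian s ∧ ∀ u, IsFactor w u ↔ IsFactor s u

/-- `t` is fine: there is an infinite word `s` such that for every total order on the
alphabet and every letter `a` minimal for that order, `min(t) = a·s`. -/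
def Fine {A : Type*} (t : ℕ → A) : Prop :=
  ∃ s : ℕ → A, ∀ (l : LinearOrder A) (a : A), (∀ b, l.le a b) →
    IsMinWord l.lt t (consW a s)

namespace ARwork

variable {A : Type*}

/-- the segment `w[i..i+m)` -/
def seg (w : ℕ → A) (i m : ℕ) : List A := (List.range m).map (fun j => w (i + j))

@[simp] lemma seg_length (w : ℕ → A) (i m : ℕ) : (seg w i m).length = m := by
  simp [seg]

@[simp] lemma seg_zero (w : ℕ → A) (i : ℕ) : seg w i 0 = [] := by simp [seg]

lemma seg_cons (w : ℕ → A) (i m : ℕ) : seg w i (m + 1) = w i :: seg w (i + 1) m := by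
  simp only [seg, List.range_succ_eq_map, List.map_cons, List.map_map, Function.comp_def]
  refine ?_
  congr 1
  apply List.map_congr_left; intro x _; congr 1; omega

lemma seg_append (w : ℕ → A) (i m n : ℕ) :
    seg w i (m + n) = seg w i m ++ seg w (i + m) n := by
  induction m generalizing i with
  | zero => simp
  | succ m ih =>
      have : m + 1 + n = (m + n) + 1 := by ring
      rw [this, seg_cons, seg_cons, ih]
      simp [List.cons_append]
      ring_nf

lemma seg_snoc (w : ℕ → A) (i m : ℕ) :
    seg w i (m + 1) = seg w i m ++ [w (i + m)] := by
  rw [seg_append w i m 1]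
  simp [seg_cons]

lemma pref_eq_seg (w : ℕ → A) (k : ℕ) : pref w k = seg w 0 k := by
  simp [pref, seg]

lemma pref_snoc (w : ℕ → A) (k : ℕ) : pref w (k + 1) = pref w k ++ [w k] := by
  rw [pref_eq_seg, pref_eq_seg, seg_snoc]; simp

lemma isFactor_iff (w : ℕ → A) (u : List A) :
    IsFactor w u ↔ ∃ i, u = seg w i u.length := Iff.rfl

lemma isFactor_seg (w : ℕ → A) (i m : ℕ) : IsFactor w (seg w i m) := by
  exact ⟨i, by simp [seg]⟩

lemma isFactor_pref (w : ℕ → A) (k : ℕ) : IsFactor w (pref w k) := by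
  rw [pref_eq_seg]; exact isFactor_seg w 0 k

@[simp] lemma pref_length (w : ℕ → A) (k : ℕ) : (pref w k).length = k := by simp [pref]

lemma pref_consW (a : A) (s : ℕ → A) (k : ℕ) :
    pref (consW a s) (k + 1) = a :: pref s k := by
  simp [pref, List.range_succ_eq_map, List.map_map, Function.comp_def, consW]

/-- factors are closed under infixes -/
lemma isFactor_infix {w : ℕ → A} {u v : List A} (hv : IsFactor w v) (h : u <:+: v) :
    IsFactor w u := by
  rw [isFactor_iff] at hv
  obtain ⟨i, hi⟩ := hv
  obtain ⟨t, t', ht⟩ := h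
  refine ⟨i + t.length, ?_⟩
  have hlen : v.length = t.length + (u.length + t'.length) := by
    rw [← ht]; simp
  rw [hlen, seg_append, seg_append] at hi
  have h1 : t ++ (u ++ t') = seg w i t.length ++ (seg w (i + t.length) u.length ++
      seg w (i + t.length + u.length) t'.length) := by
    rw [← List.append_assoc, ht]; exact hi
  have h2 := (List.append_inj h1 (by simp)).2
  exact (List.append_inj h2 (by simp)).1

lemma isFactor_of_seg_eq {w : ℕ → A} {u : List A} {i : ℕ} (h : u = seg w i u.length) :
    IsFactor w u := ⟨i, h⟩

/-- prefixes of factors are factors -/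
lemma isFactor_take {w : ℕ → A} {v : List A} (hv : IsFactor w v) (n : ℕ) :
    IsFactor w (v.take n) :=
  isFactor_infix hv (List.IsPrefix.isInfix (List.take_prefix n v))

lemma isFactor_tail {w : ℕ → A} {v : List A} (hv : IsFactor w v) :
    IsFactor w v.tail :=
  isFactor_infix hv (List.IsSuffix.isInfix (List.tail_suffix v))

/-- downward closed: cons -/
lemma isFactor_of_cons {w : ℕ → A} {c : A} {v : List A} (hv : IsFactor w (c :: v)) :
    IsFactor w v := isFactor_tail hv

lemma pref_take (w : ℕ → A) {j k : ℕ} (h : j ≤ k) : (pref w k).take j = pref w j := by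
  simp only [pref, ← List.map_take, List.take_range]
  congr 2
  omega

/-- first-difference decomposition for equal-length lists -/
lemma firstDiff {P v : List A} (h : P.length = v.length) :
    P = v ∨ ∃ (r P' v' : List A) (x y : A), x ≠ y ∧ P = r ++ x :: P' ∧ v = r ++ y :: v' := by
  induction P generalizing v with
  | nil => left; cases v with
      | nil => rfl
      | cons b v' => simp at h
  | cons p P' ih =>
      cases v with
      | nil => simp at h
      | cons q v' =>
          by_cases hpq : p = q
          · subst hpq
            rcases ih (by simpa using h) with heq | ⟨r, P'', v'', x, y, hxy, h1, h2⟩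
            · left; rw [heq]
            · right; exact ⟨p :: r, P'', v'', x, y, hxy, by simp [h1], by simp [h2]⟩
          · right; exact ⟨[], P', v', p, q, hpq, by simp, by simp⟩

/-- Lex with common prefix stripped -/
lemma lex_append_iff {lt : A → A → Prop} (hirr : ∀ a, ¬ lt a a) (r p q : List A) :
    List.Lex lt (r ++ p) (r ++ q) ↔ List.Lex lt p q := by
  induction r with
  | nil => simp
  | cons c r ih =>
      constructor
      · intro h
        cases h with
        | cons h => exact ih.mp h
        | rel h => exact absurd h (hirr c)
      · intro h; exact List.Lex.cons (ih.mpr h)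

lemma lex_head {lt : A → A → Prop} {x y : A} {p q : List A} (hxy : x ≠ y)
    (h : List.Lex lt (x :: p) (y :: q)) : lt x y := by
  cases h with
  | cons h => exact absurd rfl hxy
  | rel h => exact h


section Orders
variable [Fintype A]

open Classical in
noncomputable def rankF (A : Type*) [Fintype A] : A → ℕ := fun x =>
  (Fintype.equivFin A x : ℕ)

lemma rankF_inj (A : Type*) [Fintype A] : Function.Injective (rankF A) := by
  intro x y h
  classical
  have := Fin.val_injective h
  exact (Fintype.equivFin A).injective this

lemma rankF_lt (A : Type*) [Fintype A] (x : A) : rankF A x < Fintype.card A := by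
  classical
  exact (Fintype.equivFin A x).isLt

noncomputable def mkOrder (f : A → ℕ) : LinearOrder A :=
  LinearOrder.lift' (fun x => f x * Fintype.card A + rankF A x) (by
    intro x y h
    simp only at h
    have hx := rankF_lt A x
    have hy := rankF_lt A y
    have hf : f x = f y := by nlinarith
    rw [hf] at h
    have : rankF A x = rankF A y := by omega
    exact rankF_inj A this)

lemma mkOrder_le {f : A → ℕ} {x y : A} :
    (mkOrder f).le x y ↔ f x * Fintype.card A + rankF A x ≤ f y * Fintype.card A + rankF A y :=
  Iff.rfl

lemma mkOrder_lt {f : A → ℕ} {x y : A} :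
    (mkOrder f).lt x y ↔ f x * Fintype.card A + rankF A x < f y * Fintype.card A + rankF A y :=
  Iff.rfl

lemma mkOrder_min {f : A → ℕ} {a : A} (hfa : f a = 0) (hf : ∀ b, b ≠ a → 1 ≤ f b) :
    ∀ b, (mkOrder f).le a b := by
  intro b
  rw [mkOrder_le, hfa]
  by_cases hb : b = a
  · subst hb; simp
  · have h1 := hf b hb
    have h2 := rankF_lt A a
    nlinarith

lemma mkOrder_lt_of_lt {f : A → ℕ} {x y : A} (h : f x < f y) : (mkOrder f).lt x y := by
  rw [mkOrder_lt]
  have := rankF_lt A x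
  nlinarith

open Classical in
/-- the standard gadget: an order with `a` minimum and `x < y` -/
noncomputable def gadget (a x y : A) : LinearOrder A :=
  mkOrder (fun t => if t = a then 0 else if t = x then 1 else if t = y then 2 else 3)

lemma gadget_min (a x y : A) : ∀ b, (gadget a x y).le a b := by
  classical
  apply mkOrder_min
  · simp
  · intro b hb
    simp only [if_neg hb]
    split
    · exact le_refl 1
    · split
      · exact one_le_two
      · norm_num

lemma gadget_lt {a x y : A} (hx : x ≠ a) (hy : y ≠ a) (hxy : x ≠ y) :
    (gadget a x y).lt x y := by
  classical
  apply mkOrder_lt_of_lt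
  simp only [if_neg hx, if_neg hy, if_pos rfl, if_neg (Ne.symm hxy)]
  exact one_lt_two

end Orders


section Forward

variable {s : ℕ → A}

lemma dagger (hS : StrictStdEpisturmian s) {a x : A} {j : ℕ}
    (hf : IsFactor s (a :: (pref s j ++ [x]))) (hne : x ≠ s j) : s j = a := by
  set q := pref s j with hq
  have hqlen : q.length = j := by simp [hq]
  have h1 : IsFactor s (q ++ [x]) := isFactor_of_cons hf
  have h2 : IsFactor s (q ++ [s j]) := by
    rw [hq, ← pref_snoc]; exact isFactor_pref s (j+1)
  have hr1 : IsFactor s (x :: q.reverse) := by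
    have := hS.1.1 _ h1; simpa using this
  have hr2 : IsFactor s (s j :: q.reverse) := by
    have := hS.1.1 _ h2; simpa using this
  have hls : LeftSpecial s q.reverse := ⟨x, s j, hne, hr1, hr2⟩
  have hpal : q.reverse = q := by
    have := hS.1.2 _ hls
    rw [List.length_reverse, hqlen, ← hq] at this
    exact this
  by_contra hax
  -- x :: q ++ [a] is a factor (reversal of a :: q ++ [x])
  have hxa : IsFactor s ((x :: q) ++ [a]) := by
    have := hS.1.1 _ hf
    simp only [List.reverse_cons, List.reverse_append, List.reverse_singleton] at this
    simpa [hpal] using this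
  -- x :: q ++ [s j] is a factor (strictness)
  have hxy : IsFactor s ((x :: q) ++ [s j]) := by
    have := hS.2 (j+1) x
    rw [pref_snoc, ← hq] at this
    simpa using this
  -- reversals: a :: (q ++ [x]) (have already), s j :: (q ++ [x])
  have hra : IsFactor s (a :: (q ++ [x])) := hf
  have hry : IsFactor s (s j :: (q ++ [x])) := by
    have := hS.1.1 _ hxy
    simp only [List.reverse_append, List.reverse_cons, List.reverse_singleton] at this
    simpa [hpal] using this
  have hls2 : LeftSpecial s (q ++ [x]) := ⟨a, s j, fun h => hax h.symm, hra, hry⟩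
  have := hS.1.2 _ hls2
  rw [List.length_append, hqlen] at this
  simp only [List.length_singleton] at this
  rw [pref_snoc, ← hq] at this
  have : x = s j := by
    have := List.append_inj this (by simp)
    simpa using this.2
  exact hne this

lemma forward (hS : StrictStdEpisturmian s) (l : LinearOrder A) (a : A)
    (ha : ∀ b, l.le a b) : IsMinWord l.lt s (consW a s) := by
  intro k
  refine ⟨?_, by simp, ?_⟩
  · cases k with
    | zero => exact ⟨0, by simp [pref]⟩
    | succ k => rw [pref_consW]; exact hS.2 k a
  · intro v hv hlen
    cases k with
    | zero =>
        left
        have : v = [] := List.length_eq_zero_iff.mp hlen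
        simp [pref, this]
    | succ k =>
        letI := l
        have hirr : ∀ t : A, ¬ l.lt t t := fun t => lt_irrefl t
        rcases firstDiff (P := pref (consW a s) (k+1)) (v := v) (by rw [hlen]; simp)
          with heq | ⟨r, P', v', x, y, hxy, h1, h2⟩
        · exact Or.inl heq
        · right
          rw [h1, h2, lex_append_iff hirr]
          cases r with
          | nil =>
              simp only [List.nil_append] at h1 h2
              rw [pref_consW] at h1
              have hxa : x = a := ((List.cons_eq_cons.mp h1).1).symm
              subst hxa
              exact List.Lex.rel (lt_of_le_of_ne (ha y) hxy)
          | cons c r' =>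
              rw [pref_consW] at h1
              simp only [List.cons_append, List.cons.injEq] at h1
              obtain ⟨hca, htail⟩ := h1
              -- pref s k = r' ++ x :: P'
              have hklen : k = r'.length + (1 + P'.length) := by
                have := congrArg List.length htail
                simp at this
                omega
              have hseg : pref s k = pref s r'.length ++
                  (s r'.length :: seg s (r'.length + 1) P'.length) := by
                rw [pref_eq_seg, hklen, seg_append, Nat.add_comm 1 P'.length, ← seg_cons]
                simp [pref_eq_seg]
              rw [hseg] at htail
              have hinj := List.append_inj htail.symm (by simp)
              obtain ⟨hr', hxp⟩ := hinj
              have hx : x = s r'.length := (List.cons_eq_cons.mp hxp).1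
              -- the factor a :: (pref s r'.length ++ [y])
              have hfac : IsFactor s (a :: (pref s r'.length ++ [y])) := by
                have hpre : (a :: (r' ++ [y])) ++ v' = v := by
                  rw [h2, hca]; simp
                have : IsFactor s (a :: (r' ++ [y])) :=
                  isFactor_infix hv ⟨[], v', by rw [← hpre]; simp⟩
                rwa [hr'] at this
              have hya : s r'.length = a := by
                apply dagger hS hfac
                rw [← hx]; exact fun h => hxy h.symm
              apply List.Lex.rel
              rw [hx, hya]
              exact lt_of_le_of_ne (ha y) (by rw [← hya, ← hx]; exact hxy)

end Forward

section Blocks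

variable [DecidableEq A] (s : ℕ → A) (z : A)

/-- start positions of the blocks of `s` w.r.t. separating letter `z` -/
def bfun : ℕ → ℕ
  | 0 => 0
  | n + 1 => if s (bfun n + 1) = z then bfun n + 1 else bfun n + 2

/-- the derived word -/
def yder : ℕ → A := fun n =>
  if s (bfun s z n + 1) = z then z else s (bfun s z n + 1)

variable {s z}
variable (hz : s 0 = z) (hsep : ∀ i, s i ≠ z → s (i + 1) = z)

@[simp] lemma bfun_zero : bfun s z 0 = 0 := rfl

include hz hsep in
lemma bfun_start : ∀ n, s (bfun s z n) = z := by
  intro n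
  induction n with
  | zero => simpa using hz
  | succ n ih =>
      by_cases h : s (bfun s z n + 1) = z
      · rw [bfun, if_pos h]; exact h
      · rw [bfun, if_neg h]; exact hsep _ h

lemma bfun_succ_ge (n : ℕ) : bfun s z n + 1 ≤ bfun s z (n + 1) := by
  rw [bfun]; split <;> omega

lemma bfun_succ_le (n : ℕ) : bfun s z (n + 1) ≤ bfun s z n + 2 := by
  rw [bfun]; split <;> omega

lemma bfun_mono_add (n t : ℕ) : bfun s z n + t ≤ bfun s z (n + t) := by
  induction t with
  | zero => simp
  | succ t ih =>
      have h1 := bfun_succ_ge (s := s) (z := z) (n + t)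
      have hE : n + (t + 1) = (n + t) + 1 := by ring
      rw [hE]
      omega

lemma yder_z_iff (n : ℕ) : yder s z n = z ↔ s (bfun s z n + 1) = z := by
  unfold yder
  split
  · simp [*]
  · simpa using ‹¬ _›

lemma bfun_of_yz {n : ℕ} (h : yder s z n = z) : bfun s z (n + 1) = bfun s z n + 1 := by
  rw [bfun, if_pos ((yder_z_iff n).mp h)]

lemma bfun_of_ynz {n : ℕ} (h : yder s z n ≠ z) : bfun s z (n + 1) = bfun s z n + 2 := by
  rw [bfun, if_neg (fun hh => h ((yder_z_iff n).mpr hh))]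

lemma yder_of_nz {n : ℕ} (h : s (bfun s z n + 1) ≠ z) : yder s z n = s (bfun s z n + 1) := by
  unfold yder; rw [if_neg h]

include hz hsep in
/-- every `z`-position is a block start (plus dichotomy) -/
lemma block_dichotomy : ∀ i, (∃ n, bfun s z n = i) ∨ (s i ≠ z ∧ ∃ n, bfun s z n = i + 1) := by
  intro i
  induction i with
  | zero => exact Or.inl ⟨0, rfl⟩
  | succ i ih =>
      rcases ih with ⟨n, hn⟩ | ⟨hi, n, hn⟩
      · by_cases h : s (i + 1) = z
        · left; exact ⟨n + 1, by rw [bfun, hn, if_pos h]⟩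
        · right
          refine ⟨h, n + 1, ?_⟩
          rw [bfun, hn, if_neg h]
      · left; exact ⟨n, hn⟩

include hz hsep in
lemma exists_block_start {i : ℕ} (h : s i = z) : ∃ n, bfun s z n = i := by
  rcases block_dichotomy hz hsep i with h' | ⟨h', _⟩
  · exact h'
  · exact absurd h h'

@[simp] lemma psiL_nil : psiL z ([] : List A) = [] := rfl

lemma psiL_cons (c : A) (v : List A) :
    psiL z (c :: v) = (if c = z then [z] else [z, c]) ++ psiL z v := by
  simp [psiL]

lemma psiL_append (u v : List A) : psiL z (u ++ v) = psiL z u ++ psiL z v := by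
  simp [psiL]

lemma psiL_reverse (v : List A) :
    (psiL z v ++ [z]).reverse = psiL z v.reverse ++ [z] := by
  induction v with
  | nil => simp
  | cons c v ih =>
      rw [psiL_cons, List.reverse_cons, psiL_append, List.append_assoc, List.reverse_append, ih]
      by_cases hc : c = z
      · rw [if_pos hc, hc]; simp [psiL]
      · rw [if_neg hc]; simp [psiL, hc]

include hz hsep in
lemma psiL_seg : ∀ (j n : ℕ), psiL z (seg (yder s z) n j) ++ [z] =
    seg s (bfun s z n) (bfun s z (n + j) - bfun s z n + 1) := by
  intro j
  induction j with
  | zero =>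
      intro n
      simp [seg_cons, bfun_start hz hsep]
  | succ j ih =>
      intro n
      rw [seg_cons, psiL_cons]
      have hstep : bfun s z n + (bfun s z (n+1) - bfun s z n) = bfun s z (n+1) := by
        have := bfun_succ_ge (s := s) (z := z) n; omega
      have harith : bfun s z (n + (j+1)) - bfun s z n + 1 =
          (bfun s z (n+1) - bfun s z n) + (bfun s z ((n+1) + j) - bfun s z (n+1) + 1) := by
        have h1 := bfun_succ_ge (s := s) (z := z) n
        have h2 := bfun_mono_add (s := s) (z := z) (n+1) j
        have : n + (j + 1) = (n + 1) + j := by ring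
        rw [this]
        omega
      have hblock : (if yder s z n = z then [z] else [z, yder s z n]) =
          seg s (bfun s z n) (bfun s z (n+1) - bfun s z n) := by
        by_cases h : yder s z n = z
        · rw [if_pos h, bfun_of_yz h]
          have h1 : bfun s z n + 1 - bfun s z n = 1 := by omega
          rw [h1, seg_cons, seg_zero, bfun_start hz hsep]
        · rw [if_neg h, bfun_of_ynz h]
          have h1 : bfun s z n + 2 - bfun s z n = 2 := by omega
          rw [h1, seg_cons, seg_cons, seg_zero, bfun_start hz hsep,
            yder_of_nz (fun hh => h ((yder_z_iff n).mpr hh))]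
      rw [List.append_assoc, ih (n + 1), hblock, harith]
      simp only [seg_append, List.append_assoc]
      rw [hstep]

include hz hsep in
lemma psiL_decode : ∀ (v : List A) (m : ℕ),
    psiL z v ++ [z] = seg s (bfun s z m) ((psiL z v).length + 1) →
    v = seg (yder s z) m v.length := by
  intro v
  induction v with
  | nil => intro m _; simp
  | cons c v ih =>
      intro m h
      rw [psiL_cons] at h
      by_cases hc : c = z
      · rw [if_pos hc] at h
        have hlen : ([z] ++ psiL z v).length + 1 = 1 + ((psiL z v).length + 1) := by
          simp; try omega
        rw [hlen, seg_append, seg_cons, seg_zero] at h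
        simp only [List.singleton_append, List.append_assoc, List.cons_append,
          List.nil_append] at h
        have h2 := (List.cons_eq_cons.mp h).2
        have hznext : s (bfun s z m + 1) = z := by
          have : (psiL z v ++ [z]).head? = some z := by
            cases v with
            | nil => simp
            | cons d v' => rw [psiL_cons]; split <;> simp
          rw [h2] at this
          have hh : seg s (bfun s z m + 1) ((psiL z v).length + 1) =
              s (bfun s z m + 1) :: seg s (bfun s z m + 2) (psiL z v).length := by
            rw [seg_cons]
          rw [hh] at this
          simpa using this
        have hyz : yder s z m = z := (yder_z_iff m).mpr hznext
        have hb : bfun s z (m+1) = bfun s z m + 1 := bfun_of_yz hyz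
        have := ih (m + 1) (by rw [hb]; exact h2)
        rw [List.length_cons, seg_cons, ← this, hyz, hc]
      · rw [if_neg hc] at h
        have hlen : ([z, c] ++ psiL z v).length + 1 = 2 + ((psiL z v).length + 1) := by
          simp; try omega
        rw [hlen, seg_append, seg_cons, seg_cons, seg_zero] at h
        simp only [List.cons_append, List.nil_append] at h
        have h1 := List.cons_eq_cons.mp h
        have h2 := List.cons_eq_cons.mp h1.2
        have hcnz : s (bfun s z m + 1) = c := h2.1.symm
        have hynz : yder s z m = c := by
          rw [yder_of_nz (by rw [hcnz]; exact hc)]; exact hcnz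
        have hb : bfun s z (m+1) = bfun s z m + 2 := by
          apply bfun_of_ynz; rw [hynz]; exact hc
        have := ih (m + 1) (by rw [hb]; exact h2.2)
        rw [List.length_cons, seg_cons, ← this, hynz]

end Blocks

def MinCond [Fintype A] (s : ℕ → A) : Prop :=
  ∀ (l : LinearOrder A) (a : A), (∀ b, l.le a b) → IsMinWord l.lt s (consW a s)

section MinConsequences

variable [Fintype A] {s : ℕ → A}

lemma lex_pair {lt : A → A → Prop} (hirr : ∀ t, ¬ lt t t) {a b c : A}
    (h : List.Lex lt [a, b] [a, c]) : lt b c := by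
  cases h with
  | rel h => exact absurd h (hirr a)
  | cons h =>
      cases h with
      | rel h => exact h
      | cons h => cases h

lemma pref_decomp {k : ℕ} {r t : List A} {y : A} (h : pref s k = r ++ y :: t) :
    r = pref s r.length ∧ y = s r.length := by
  have hk : k = r.length + (1 + t.length) := by
    have := congrArg List.length h; simp at this; omega
  have hseg : pref s k = pref s r.length ++ (s r.length :: seg s (r.length + 1) t.length) := by
    rw [pref_eq_seg, hk, seg_append, Nat.add_comm 1 t.length, ← seg_cons]
    simp [pref_eq_seg]
  rw [hseg] at h
  have hinj := List.append_inj h (by simp)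
  exact ⟨hinj.1.symm, ((List.cons_eq_cons.mp hinj.2).1).symm⟩

lemma strict_of_minCond (hM : MinCond s) (n : ℕ) (a : A) : IsFactor s (a :: pref s n) := by
  have h := (hM (gadget a a a) a (gadget_min a a a) (n + 1)).1
  rwa [pref_consW] at h

lemma ls_of_minCond (hM : MinCond s) : ∀ u, LeftSpecial s u → u = pref s u.length := by
  rintro u ⟨c, d, hcd, hcu, hdu⟩
  rcases firstDiff (P := u) (v := pref s u.length) (by simp)
    with heq | ⟨r, u', p', x, y, hxy, h1, h2⟩
  · exact heq
  · obtain ⟨hr, hy⟩ := pref_decomp h2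
    have key : ∀ (l : LinearOrder A) (m : A), (∀ b, l.le m b) → IsFactor s (m :: u) →
        u = pref s u.length ∨ l.lt y x := by
      intro l m hm hf
      have h3 := (hM l m hm (u.length + 1)).2.2 (m :: u) hf (by simp)
      rw [pref_consW] at h3
      rcases h3 with h3 | h3
      · left; exact ((List.cons_eq_cons.mp h3).2).symm
      · right
        letI := l
        have hirr : ∀ t : A, ¬ l.lt t t := fun t => lt_irrefl t
        rw [h2, h1] at h3
        have h4 : List.Lex l.lt ((m :: r) ++ y :: p') ((m :: r) ++ x :: u') := by
          simpa using h3
        exact lex_head (fun h => hxy h.symm) ((lex_append_iff hirr _ _ _).mp h4)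
    by_cases hyc : y = c
    · have hyd : y ≠ d := by rw [hyc]; exact hcd
      by_cases hxd : x = d
      · rcases key (gadget d d d) d (gadget_min d d d) hdu with hu | hlt
        · exact hu
        · letI := gadget d d d
          rw [hxd] at hlt
          exact absurd hlt (not_lt.mpr (gadget_min d d d y))
      · rcases key (gadget d x y) d (gadget_min d x y) hdu with hu | hlt
        · exact hu
        · letI := gadget d x y
          exact absurd hlt (lt_asymm (gadget_lt hxd hyd hxy))
    · by_cases hxc : x = c
      · rcases key (gadget c c c) c (gadget_min c c c) hcu with hu | hlt
        · exact hu
        · letI := gadget c c c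
          rw [hxc] at hlt
          exact absurd hlt (not_lt.mpr (gadget_min c c c y))
      · rcases key (gadget c x y) c (gadget_min c x y) hcu with hu | hlt
        · exact hu
        · letI := gadget c x y
          exact absurd hlt (lt_asymm (gadget_lt hxc hyc hxy))

lemma sep_of_minCond (hM : MinCond s) : ∀ i, s i ≠ s 0 → s (i + 1) = s 0 := by
  intro i hx
  set z := s 0 with hzdef
  set x := s i with hxdef
  set w := s (i + 1) with hwdef
  by_contra hw
  have hfac : IsFactor s [x, w] := by
    have h := isFactor_seg s i 2
    rw [seg_cons, seg_cons, seg_zero] at h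
    exact h
  have hp2 : ∀ (l : LinearOrder A), (∀ b, l.le x b) →
      ([x, z] = [x, w] ∨ List.Lex l.lt [x, z] [x, w]) := by
    intro l hm
    have h3 := (hM l x hm 2).2.2 [x, w] hfac (by simp)
    rw [pref_consW] at h3
    have h1 : pref s 1 = [z] := by
      rw [hzdef]
      have : pref s 1 = pref s 0 ++ [s 0] := pref_snoc s 0
      simpa [pref] using this
    rwa [h1] at h3
  by_cases hwx : w = x
  · rcases hp2 (gadget x x x) (gadget_min x x x) with he | hl
    · exact hw (((List.cons_eq_cons.mp ((List.cons_eq_cons.mp he).2)).1)).symm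
    · letI := gadget x x x
      have hirr : ∀ t : A, ¬ (gadget x x x).lt t t := fun t => lt_irrefl t
      have := lex_pair hirr hl
      rw [hwx] at this
      exact absurd this (not_lt.mpr (gadget_min x x x z))
  · rcases hp2 (gadget x w z) (gadget_min x w z) with he | hl
    · exact hw (((List.cons_eq_cons.mp ((List.cons_eq_cons.mp he).2)).1)).symm
    · letI := gadget x w z
      have hirr : ∀ t : A, ¬ (gadget x w z).lt t t := fun t => lt_irrefl t
      have hzw := lex_pair hirr hl
      have hzx : z ≠ x := fun h => hx h.symm
      have hwz : w ≠ z := hw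
      exact absurd hzw (lt_asymm (gadget_lt hwx hzx hwz))

end MinConsequences

section Transfer

variable [Fintype A] [DecidableEq A] {s : ℕ → A} {z : A}
variable (hz : s 0 = z) (hsep : ∀ i, s i ≠ z → s (i + 1) = z)

lemma yder_eq (n : ℕ) : yder s z n = s (bfun s z n + 1) := by
  unfold yder; split <;> simp [*]

include hz hsep in
lemma psiL_pref (t : ℕ) : psiL z (pref (yder s z) t) = pref s (bfun s z t) := by
  have h := psiL_seg hz hsep t 0
  rw [bfun_zero] at h
  simp only [Nat.zero_add, Nat.add_zero, Nat.sub_zero] at h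
  rw [← pref_eq_seg, ← pref_eq_seg] at h
  rw [pref_snoc, bfun_start hz hsep] at h
  exact (List.append_inj' h (by simp)).1

include hz hsep in
lemma factor_psi {v : List A} (hv : IsFactor (yder s z) v) :
    IsFactor s (psiL z v ++ [z]) := by
  obtain ⟨n, hn⟩ := hv
  rw [← seg] at hn
  rw [hn, psiL_seg hz hsep]
  exact isFactor_seg _ _ _

lemma psiL_head_z (v : List A) : ∃ t, psiL z v ++ [z] = z :: t := by
  cases v with
  | nil => exact ⟨[], rfl⟩
  | cons c v' =>
      rw [psiL_cons]
      by_cases hc : c = z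
      · rw [if_pos hc]; exact ⟨psiL z v' ++ [z], by simp⟩
      · rw [if_neg hc]; exact ⟨[c] ++ psiL z v' ++ [z], by simp⟩

include hz hsep in
lemma factor_unpsi {v : List A} (hf : IsFactor s (psiL z v ++ [z])) :
    IsFactor (yder s z) v := by
  obtain ⟨i, hi⟩ := hf
  rw [← seg] at hi
  have hiz : s i = z := by
    obtain ⟨t, ht⟩ := psiL_head_z (z := z) v
    rw [ht] at hi
    have hlen : (z :: t).length = t.length + 1 := by simp
    rw [hlen, seg_cons] at hi
    exact ((List.cons_eq_cons.mp hi).1).symm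
  obtain ⟨m, hm⟩ := exists_block_start hz hsep hiz
  have hlen2 : (psiL z v ++ [z]).length = (psiL z v).length + 1 := by simp
  rw [hlen2, ← hm] at hi
  have := psiL_decode hz hsep v m hi
  exact ⟨m, by rw [← seg]; exact this⟩

include hz hsep in
lemma minCond_yder (hM : MinCond s) : MinCond (yder s z) := by
  intro l a ha k
  set y := yder s z with hy
  refine ⟨?_, by simp, ?_⟩
  · -- the min word prefixes are factors of y
    cases k with
    | zero => exact ⟨0, by simp [pref]⟩
    | succ k =>
        rw [pref_consW]
        apply factor_unpsi hz hsep
        have hpsi : psiL z (a :: pref y k) ++ [z] =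
            (if a = z then [z] else [z, a]) ++ pref s (bfun s z k + 1) := by
          rw [psiL_cons, List.append_assoc, psiL_pref hz hsep,
            pref_snoc, bfun_start hz hsep]
        rw [hpsi]
        by_cases haz : a = z
        · rw [if_pos haz]
          have := strict_of_minCond hM (bfun s z k + 1) z
          simpa using this
        · rw [if_neg haz]
          obtain ⟨p, hp⟩ := strict_of_minCond hM (bfun s z k + 1) a
          rw [← seg] at hp
          have hlen : (a :: pref s (bfun s z k + 1)).length = bfun s z k + 2 := by simp
          rw [hlen] at hp
          have hpa : s p = a := by
            rw [seg_cons] at hp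
            exact ((List.cons_eq_cons.mp hp).1).symm
          have hp0 : p ≠ 0 := by
            intro h; rw [h, hz] at hpa; exact haz hpa.symm
          obtain ⟨p', rfl⟩ := Nat.exists_eq_succ_of_ne_zero hp0
          have hpz : s p' = z := by
            by_contra hne
            have := hsep p' hne
            rw [this] at hpa; exact haz hpa.symm
          refine ⟨p', ?_⟩
          have hL : ([z, a] ++ pref s (bfun s z k + 1)).length = bfun s z k + 3 := by simp
          rw [hL, ← seg]
          have h23 : bfun s z k + 3 = (bfun s z k + 2) + 1 := by omega
          rw [h23, seg_cons, hpz, ← hp]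
          simp
  · -- minimality
    intro v hv hlen
    cases k with
    | zero =>
        left
        have : v = [] := List.length_eq_zero_iff.mp hlen
        simp [pref, this]
    | succ k =>
        letI := l
        have hirr : ∀ t : A, ¬ l.lt t t := fun t => lt_irrefl t
        cases v with
        | nil => simp at hlen
        | cons c v' =>
            rw [pref_consW]
            by_cases hca : c = a
            · rw [hca] at hv ⊢
              have hvlen : v'.length = k := by simpa using hlen
              rcases firstDiff (P := pref y k) (v := v') (by simp [hvlen])
                with heq | ⟨r, p', v₁, yt, xt, hne, hw, hv'⟩
              · left; rw [heq]
              · obtain ⟨hr, hyt⟩ := pref_decomp (s := y) hw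
                set t := r.length with ht
                -- the key comparison
                have e1 : s (bfun s z t) = z := bfun_start hz hsep t
                have e2 : s (bfun s z t + 1) = yt := by
                  rw [hyt]; exact (yder_eq t).symm
                have cmp : ∀ (l2 : LinearOrder A), (∀ b, l2.le a b) → l2.lt yt xt := by
                  intro l2 hmin
                  have hirr2 : ∀ u : A, ¬ l2.lt u u := by
                    letI := l2; exact fun u => lt_irrefl u
                  have hfy : IsFactor y (a :: (r ++ [xt])) := by
                    apply isFactor_infix hv ⟨[], v₁, ?_⟩
                    rw [hv']
                    simp
                  have hfs := factor_psi hz hsep hfy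
                  have hpsi2 : psiL z (a :: (r ++ [xt])) ++ [z] =
                      (if a = z then [z] else [z, a]) ++ (pref s (bfun s z t) ++
                        ((if xt = z then [z] else [z, xt]) ++ [z])) := by
                    rw [psiL_cons, psiL_append]
                    have h1 : psiL z [xt] = (if xt = z then [z] else [z, xt]) := by
                      simp [psiL]
                    rw [h1, hr, psiL_pref hz hsep]
                    simp [List.append_assoc]
                  rw [hpsi2] at hfs
                  have hG : IsFactor s ([a] ++ (pref s (bfun s z t) ++
                      ((if xt = z then [z] else [z, xt]) ++ [z]))) := by
                    by_cases haz : a = z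
                    · rw [if_pos haz] at hfs
                      rw [haz]
                      exact hfs
                    · rw [if_neg haz] at hfs
                      exact isFactor_infix hfs ⟨[z], [], by simp⟩
                  by_cases hxz : xt = z
                  · rw [if_pos hxz] at hG
                    have hGlen : ([a] ++ (pref s (bfun s z t) ++ ([z] ++ [z]))).length
                        = bfun s z t + 3 := by simp
                    have h3 := (hM l2 a hmin (bfun s z t + 3)).2.2 _ hG hGlen
                    have hpref : pref s (bfun s z t + 2) =
                        pref s (bfun s z t) ++ [z, yt] := by
                      have ha2 : bfun s z t + 2 = (bfun s z t + 1) + 1 := by omega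
                      rw [ha2, pref_snoc, pref_snoc, e1, e2]
                      simp
                    have hP : pref (consW a s) (bfun s z t + 3) =
                        (a :: (pref s (bfun s z t) ++ [z])) ++ [yt] := by
                      have ha3 : bfun s z t + 3 = (bfun s z t + 2) + 1 := by omega
                      rw [ha3, pref_consW, hpref]
                      simp
                    have hGeq : [a] ++ (pref s (bfun s z t) ++ ([z] ++ [z])) =
                        (a :: (pref s (bfun s z t) ++ [z])) ++ [z] := by simp
                    rw [hP, hGeq] at h3
                    rcases h3 with he | hl
                    · have := (List.append_inj' he rfl).2
                      have : yt = z := (List.cons_eq_cons.mp this).1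
                      exact absurd (this.trans hxz.symm) hne
                    · have := (lex_append_iff hirr2 _ _ _).mp hl
                      have := lex_head (fun h => hne (h.trans hxz.symm)) this
                      rw [hxz]
                      exact this
                  · rw [if_neg hxz] at hG
                    have hGlen : ([a] ++ (pref s (bfun s z t) ++ ([z, xt] ++ [z]))).length
                        = bfun s z t + 4 := by simp
                    have h3 := (hM l2 a hmin (bfun s z t + 4)).2.2 _ hG hGlen
                    have hpref : pref s (bfun s z t + 3) =
                        pref s (bfun s z t) ++ [z, yt, s (bfun s z t + 2)] := by
                      have ha3 : bfun s z t + 3 = ((bfun s z t + 1) + 1) + 1 := by omega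
                      rw [ha3, pref_snoc, pref_snoc, pref_snoc, e1, e2]
                      have : bfun s z t + 1 + 1 = bfun s z t + 2 := by omega
                      rw [this]
                      simp
                    have hP : pref (consW a s) (bfun s z t + 4) =
                        (a :: (pref s (bfun s z t) ++ [z])) ++ [yt, s (bfun s z t + 2)] := by
                      have ha4 : bfun s z t + 4 = (bfun s z t + 3) + 1 := by omega
                      rw [ha4, pref_consW, hpref]
                      simp
                    have hGeq : [a] ++ (pref s (bfun s z t) ++ ([z, xt] ++ [z])) =
                        (a :: (pref s (bfun s z t) ++ [z])) ++ [xt, z] := by simp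
                    rw [hP, hGeq] at h3
                    rcases h3 with he | hl
                    · have := (List.append_inj' he rfl).2
                      exact absurd (List.cons_eq_cons.mp this).1 hne
                    · have := (lex_append_iff hirr2 _ _ _).mp hl
                      exact lex_head hne this
                right
                have goal' : l.lt yt xt := by
                  by_cases hya : yt = a
                  · rw [hya]
                    exact lt_of_le_of_ne (ha xt) (fun h => hne (hya.trans h))
                  · exfalso
                    by_cases hxa : xt = a
                    · have h1 := cmp (gadget a a a) (gadget_min a a a)
                      letI := gadget a a a
                      rw [hxa] at h1
                      exact absurd h1 (not_lt.mpr (gadget_min a a a yt))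
                    · have h1 := cmp (gadget a xt yt) (gadget_min a xt yt)
                      letI := gadget a xt yt
                      exact absurd h1 (lt_asymm (gadget_lt hxa hya (fun h => hne h.symm)))
                rw [hw, hv']
                have hfin : List.Lex l.lt ((a :: r) ++ yt :: p') ((a :: r) ++ xt :: v₁) :=
                  (lex_append_iff hirr _ _ _).mpr (List.Lex.rel goal')
                simpa using hfin
            · right
              exact List.Lex.rel (lt_of_le_of_ne (ha c) (fun h => hca h.symm))

end Transfer

section Rev

variable [Fintype A]

lemma revclosed : ∀ (N : ℕ) (s : ℕ → A), MinCond s → ∀ u, IsFactor s u →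
    u.length ≤ N → IsFactor s u.reverse := by
  intro N
  induction N with
  | zero =>
      intro s hM u hu hlen
      have : u = [] := List.length_eq_zero_iff.mp (Nat.le_zero.mp hlen)
      simpa [this] using hu
  | succ N ih =>
      intro s hM u hu hlen
      classical
      by_cases hle : u.length ≤ 1
      · cases u with
        | nil => simpa using hu
        | cons c u' =>
            have : u' = [] := by
              have := List.length_cons (a := c) (as := u')
              have h2 : u'.length = 0 := by simp at hle; simp [hle]
              exact List.length_eq_zero_iff.mp h2
            subst this
            simpa using hu
      · push_neg at hle
        have hlen2 : 2 ≤ u.length := hle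
        set z := s 0 with hzdef
        have hz : s 0 = z := rfl
        have hsep : ∀ i, s i ≠ z → s (i + 1) = z := sep_of_minCond hM
        set y := yder s z with hydef
        obtain ⟨i, hi⟩ := hu
        rw [← seg] at hi
        -- find a block start n with bfun n ≤ i and good bound
        have hkey : ∃ n, bfun s z n ≤ i ∧
            i + u.length - 1 ≤ bfun s z (n + (u.length - 1)) := by
          by_cases hsi : s i = z
          · obtain ⟨n, hn⟩ := exists_block_start hz hsep hsi
            refine ⟨n, by omega, ?_⟩
            have := bfun_mono_add (s := s) (z := z) n (u.length - 1)
            omega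
          · have hi0 : i ≠ 0 := by
              intro h; rw [h] at hsi; exact hsi hz
            have hprev : s (i - 1) = z := by
              by_contra hne
              have := hsep (i - 1) hne
              rw [Nat.sub_add_cancel (Nat.one_le_iff_ne_zero.mpr hi0)] at this
              exact hsi this
            obtain ⟨n, hn⟩ := exists_block_start hz hsep hprev
            have hb1 : bfun s z (n + 1) = bfun s z n + 2 := by
              rw [bfun]
              rw [if_neg (by
                rw [hn, Nat.sub_add_cancel (Nat.one_le_iff_ne_zero.mpr hi0)]
                exact hsi)]
            have hmono := bfun_mono_add (s := s) (z := z) (n + 1) (u.length - 2)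
            refine ⟨n, by omega, ?_⟩
            have he : n + (u.length - 1) = (n + 1) + (u.length - 2) := by omega
            rw [he]
            omega
        obtain ⟨n, hbn, hex⟩ := hkey
        have hexists : ∃ j, i + u.length - 1 ≤ bfun s z (n + j) := ⟨u.length - 1, hex⟩
        set j := Nat.find hexists with hjdef
        have hj : i + u.length - 1 ≤ bfun s z (n + j) := Nat.find_spec hexists
        have hjle : j ≤ u.length - 1 := Nat.find_min' hexists hex
        set v := seg y n j with hvdef
        have hvfac : IsFactor y v := isFactor_seg y n j
        have hvrev : IsFactor y v.reverse := by
          apply ih y (minCond_yder hz hsep hM) v hvfac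
          rw [hvdef]
          simp
          omega
        have hfs : IsFactor s (psiL z v.reverse ++ [z]) := factor_psi hz hsep hvrev
        -- u is an infix of psiL z v ++ [z]
        have hseg : psiL z v ++ [z] =
            seg s (bfun s z n) (bfun s z (n + j) - bfun s z n + 1) := by
          rw [hvdef]; exact psiL_seg hz hsep j n
        have hinfix : u <:+: (psiL z v ++ [z]) := by
          rw [hseg]
          refine ⟨seg s (bfun s z n) (i - bfun s z n),
            seg s (i + u.length) (bfun s z (n + j) + 1 - i - u.length), ?_⟩
          have harith : bfun s z (n + j) - bfun s z n + 1 =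
              (i - bfun s z n) + (u.length + (bfun s z (n + j) + 1 - i - u.length)) := by
            omega
          rw [harith, seg_append, seg_append]
          have h1 : bfun s z n + (i - bfun s z n) = i := by omega
          rw [h1, ← hi, List.append_assoc]
        have hrevinfix : u.reverse <:+: (psiL z v.reverse ++ [z]) := by
          rw [← psiL_reverse]
          exact List.reverse_infix.mpr (by simpa using hinfix)
        exact isFactor_infix hfs hrevinfix

end Rev

end ARwork

/-- `s` is a standard Arnoux-Rauzy sequence iff `a·s = min(s)` for every letter `a`
and every order making `a` minimal. -/
theorem stmt_7 {A : Type*} [Fintype A] (s : ℕ → A) :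
    StrictStdEpisturmian s ↔
      ∀ (l : LinearOrder A) (a : A), (∀ b, l.le a b) → IsMinWord l.lt s (consW a s) := by
  constructor
  · intro hS l a ha
    exact ARwork.forward hS l a ha
  · intro hM
    have hM' : ARwork.MinCond s := hM
    refine ⟨⟨?_, ARwork.ls_of_minCond hM'⟩, fun n a => ARwork.strict_of_minCond hM' n a⟩
    intro u hu
    exact ARwork.revclosed u.length s hM' u hu le_rfl
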